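/- The number of valid Chung-Graham representations using only even indices up to 2m (i.e., strings of digits in {0,1,2} at positions 0, 2, ..., 2m with the condition that between any two positions carrying digit 2 there is a position carrying digit 0) equals F_{2m+4} − 1 plus 1, i.e., exactly F_{2m+4}, matching the count of integers 0 ≤ n < F_{2m+4}. -/

import Mathlib

/-- The value represented by a finitely supported digit sequence:
    `∑ i, a i * F (i+2)` where `F` is the Fibonacci sequence. -/
def fibVal (a : ℕ →₀ ℕ) : ℕ := a.sum fun i c => c * Nat.fib (i + 2)

/-- Zeckendorf conditions: binary digits with no two consecutive 1's. -/
def IsZeckendorf (a : ℕ →₀ ℕ) : Prop :=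
  (∀ i, a i ≤ 1) ∧ (∀ i, a i * a (i + 1) = 0)

/-- Chung-Graham conditions: digits in {0,1,2}, zero at odd indices, and
    between any two even indices carrying digit 2 there is an even index
    carrying digit 0. -/
def IsChungGraham (a : ℕ →₀ ℕ) : Prop :=
  (∀ i, a i ≤ 2) ∧ (∀ i, Odd i → a i = 0) ∧
  (∀ i j, Even i → Even j → i < j → a i = 2 → a j = 2 →
    ∃ k, Even k ∧ i < k ∧ k < j ∧ a k = 0)

/-- The `cgsplit` rule: digit 0 ↦ (0,0), 1 ↦ (0,1), 2 ↦ (1,1). -/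
def IsSplit (a b c : ℕ →₀ ℕ) : Prop :=
  ∀ i, (a i = 0 → b i = 0 ∧ c i = 0) ∧
       (a i = 1 → b i = 0 ∧ c i = 1) ∧
       (a i = 2 → b i = 1 ∧ c i = 1)

/-! ### Auxiliary development: an automaton counting argument. -/

/-- Automaton checking the Chung–Graham condition on a digit string; the state
`p` records whether a `2` has been seen since the last `0`. -/
def cgok : Bool → List ℕ → Bool
  | _, [] => true
  | _, (0 :: t) => cgok false t
  | p, (1 :: t) => cgok p t
  | p, (2 :: t) => !p && cgok true t
  | _, ((_+3) :: _) => false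

/-- "Between any two 2's there is a 0", phrased with `getD`. -/
def cgP (l : List ℕ) : Prop :=
  ∀ i j, i < j → l.getD i 0 = 2 → l.getD j 0 = 2 →
    ∃ k, i < k ∧ k < j ∧ l.getD k 0 = 0

lemma getD_cons_succ' (d : ℕ) (t : List ℕ) (k : ℕ) :
    (d :: t).getD (k+1) 0 = t.getD k 0 := rfl

lemma getD_cons_zero' (d : ℕ) (t : List ℕ) : (d :: t).getD 0 0 = d := rfl

lemma cgok_iff : ∀ l : List ℕ, (∀ x ∈ l, x ≤ 2) →
    (cgok false l = true ↔ cgP l) ∧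
    (cgok true l = true ↔ cgP l ∧ ∀ j, l.getD j 0 = 2 →
      ∃ k, k < j ∧ l.getD k 0 = 0) := by
  intro l
  induction l with
  | nil =>
    intro _
    constructor <;> simp [cgok, cgP, List.getD_nil]
  | cons d t ih0 =>
    intro hb
    have hd : d ≤ 2 := hb d (by simp)
    have ih := ih0 (fun x hx => hb x (by simp [hx]))
    have shiftP : cgP (d :: t) → cgP t := by
      intro h i j hij hi hj
      obtain ⟨k, hk1, hk2, hk3⟩ := h (i+1) (j+1) (by omega)
        (by rwa [getD_cons_succ']) (by rwa [getD_cons_succ'])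
      obtain ⟨k', rfl⟩ : ∃ k', k = k' + 1 := ⟨k - 1, by omega⟩
      exact ⟨k', by omega, by omega, by rwa [getD_cons_succ'] at hk3⟩
    have liftP : d ≠ 2 → cgP t → cgP (d :: t) := by
      intro hd' h i j hij hi hj
      obtain ⟨i', rfl⟩ : ∃ i', i = i' + 1 := by
        rcases i with _ | i'
        · rw [getD_cons_zero'] at hi; omega
        · exact ⟨i', rfl⟩
      obtain ⟨j', rfl⟩ : ∃ j', j = j' + 1 := ⟨j - 1, by omega⟩
      rw [getD_cons_succ'] at hi hj
      obtain ⟨k, hk1, hk2, hk3⟩ := h i' j' (by omega) hi hj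
      exact ⟨k + 1, by omega, by omega, by rwa [getD_cons_succ']⟩
    interval_cases d
    · -- d = 0
      have hQ : ∀ j, (0 :: t).getD j 0 = 2 →
          ∃ k, k < j ∧ (0 :: t).getD k 0 = 0 := by
        intro j hj
        rcases j with _ | j
        · rw [getD_cons_zero'] at hj; omega
        · exact ⟨0, by omega, rfl⟩
      constructor
      · rw [show cgok false (0 :: t) = cgok false t from rfl, ih.1]
        exact ⟨liftP (by omega), shiftP⟩
      · rw [show cgok true (0 :: t) = cgok false t from rfl, ih.1]
        exact ⟨fun h => ⟨liftP (by omega) h, hQ⟩, fun h => shiftP h.1⟩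
    · -- d = 1
      have hQ : (∀ j, (1 :: t).getD j 0 = 2 → ∃ k, k < j ∧ (1 :: t).getD k 0 = 0)
          ↔ (∀ j, t.getD j 0 = 2 → ∃ k, k < j ∧ t.getD k 0 = 0) := by
        constructor
        · intro h j hj
          obtain ⟨k, hk1, hk2⟩ := h (j+1) (by rwa [getD_cons_succ'])
          obtain ⟨k', rfl⟩ : ∃ k', k = k' + 1 := by
            rcases k with _ | k'
            · rw [getD_cons_zero'] at hk2; omega
            · exact ⟨k', rfl⟩
          exact ⟨k', by omega, by rwa [getD_cons_succ'] at hk2⟩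
        · intro h j hj
          obtain ⟨j', rfl⟩ : ∃ j', j = j' + 1 := by
            rcases j with _ | j'
            · rw [getD_cons_zero'] at hj; omega
            · exact ⟨j', rfl⟩
          rw [getD_cons_succ'] at hj
          obtain ⟨k, hk1, hk2⟩ := h j' hj
          exact ⟨k + 1, by omega, by rwa [getD_cons_succ']⟩
      constructor
      · rw [show cgok false (1 :: t) = cgok false t from rfl, ih.1]
        exact ⟨liftP (by omega), shiftP⟩
      · rw [show cgok true (1 :: t) = cgok true t from rfl, ih.2]
        exact ⟨fun ⟨h1, h2⟩ => ⟨liftP (by omega) h1, hQ.2 h2⟩,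
               fun ⟨h1, h2⟩ => ⟨shiftP h1, hQ.1 h2⟩⟩
    · -- d = 2
      have hP2 : cgP (2 :: t) ↔ cgP t ∧ ∀ j, t.getD j 0 = 2 →
          ∃ k, k < j ∧ t.getD k 0 = 0 := by
        constructor
        · intro h
          refine ⟨shiftP h, ?_⟩
          intro j hj
          obtain ⟨k, hk1, hk2, hk3⟩ := h 0 (j+1) (by omega) rfl
            (by rwa [getD_cons_succ'])
          obtain ⟨k', rfl⟩ : ∃ k', k = k' + 1 := ⟨k - 1, by omega⟩
          exact ⟨k', by omega, by rwa [getD_cons_succ'] at hk3⟩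
        · rintro ⟨h1, h2⟩ i j hij hi hj
          obtain ⟨j', rfl⟩ : ∃ j', j = j' + 1 := ⟨j - 1, by omega⟩
          rw [getD_cons_succ'] at hj
          rcases i with _ | i'
          · obtain ⟨k, hk1, hk2⟩ := h2 j' hj
            exact ⟨k + 1, by omega, by omega, by rwa [getD_cons_succ']⟩
          · rw [getD_cons_succ'] at hi
            obtain ⟨k, hk1, hk2, hk3⟩ := h1 i' j' (by omega) hi hj
            exact ⟨k + 1, by omega, by omega, by rwa [getD_cons_succ']⟩
      constructor
      · rw [show cgok false (2 :: t) = cgok true t from by simp [cgok], ih.2]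
        exact hP2.symm
      · constructor
        · intro h; simp [cgok] at h
        · rintro ⟨h1, h2⟩
          exfalso
          obtain ⟨k, hk1, _⟩ := h2 0 rfl
          omega

/-- Number of valid digit strings of length `n` starting in state `p`. -/
def cgcnt (p : Bool) (n : ℕ) : ℕ :=
  Fintype.card {f : Fin n → Fin 3 // cgok p (List.ofFn fun i => (f i : ℕ)) = true}

def cgEquiv (p : Bool) (n : ℕ) :
    {f : Fin (n+1) → Fin 3 // cgok p (List.ofFn fun i => (f i : ℕ)) = true} ≃
    Σ d : Fin 3, {g : Fin n → Fin 3 //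
      cgok p ((d : ℕ) :: List.ofFn fun i => (g i : ℕ)) = true} where
  toFun f := ⟨f.1 0, fun i => f.1 i.succ, by
    have := f.2
    rwa [List.ofFn_succ] at this⟩
  invFun x := ⟨Fin.cons x.1 x.2.1, by
    rw [List.ofFn_succ]
    simpa using x.2.2⟩
  left_inv f := Subtype.ext (Fin.cons_self_tail f.1)
  right_inv x := by
    rcases x with ⟨d, g, hg⟩
    simp
    rfl

lemma cgcnt_succ_false (n : ℕ) :
    cgcnt false (n+1) = 2 * cgcnt false n + cgcnt true n := by
  rw [cgcnt, Fintype.card_congr (cgEquiv false n), Fintype.card_sigma,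
    Fin.sum_univ_three]
  have h0 : ∀ l, cgok false ((((0:Fin 3)):ℕ) :: l) = cgok false l := fun l => rfl
  have h1 : ∀ l, cgok false ((((1:Fin 3)):ℕ) :: l) = cgok false l := fun l => rfl
  have h2 : ∀ l, cgok false ((((2:Fin 3)):ℕ) :: l) = cgok true l := fun l => by
    simp [cgok]
  simp only [h0, h1, h2]
  rw [show (Fintype.card {g : Fin n → Fin 3 //
      cgok false (List.ofFn fun i => (g i : ℕ)) = true}) = cgcnt false n from rfl]
  rw [show (Fintype.card {g : Fin n → Fin 3 //
      cgok true (List.ofFn fun i => (g i : ℕ)) = true}) = cgcnt true n from rfl]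
  ring

lemma cgcnt_succ_true (n : ℕ) :
    cgcnt true (n+1) = cgcnt false n + cgcnt true n := by
  rw [cgcnt, Fintype.card_congr (cgEquiv true n), Fintype.card_sigma,
    Fin.sum_univ_three]
  have h0 : ∀ l, cgok true ((((0:Fin 3)):ℕ) :: l) = cgok false l := fun l => rfl
  have h1 : ∀ l, cgok true ((((1:Fin 3)):ℕ) :: l) = cgok true l := fun l => rfl
  have h2 : ∀ l, cgok true ((((2:Fin 3)):ℕ) :: l) = false := fun l => by
    simp [cgok]
  simp only [h0, h1, h2]
  rw [show (Fintype.card {g : Fin n → Fin 3 //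
      cgok false (List.ofFn fun i => (g i : ℕ)) = true}) = cgcnt false n from rfl]
  rw [show (Fintype.card {g : Fin n → Fin 3 //
      cgok true (List.ofFn fun i => (g i : ℕ)) = true}) = cgcnt true n from rfl]
  have : Fintype.card {g : Fin n → Fin 3 // false = true} = 0 := by
    simp
  omega

lemma cgcnt_zero (p : Bool) : cgcnt p 0 = 1 := by
  rw [cgcnt]
  have : ∀ f : Fin 0 → Fin 3, cgok p (List.ofFn fun i => (f i : ℕ)) = true := by
    intro f; simp [List.ofFn_zero, cgok]
  rw [Fintype.card_subtype]
  simp [this, show cgok p [] = true from rfl]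

lemma cgcnt_eq (n : ℕ) :
    cgcnt false n = Nat.fib (2*n+2) ∧ cgcnt true n = Nat.fib (2*n+1) := by
  induction n with
  | zero => simp [cgcnt_zero]
  | succ n ih =>
    have a : Nat.fib (2*n+3) = Nat.fib (2*n+1) + Nat.fib (2*n+2) := by
      rw [show 2*n+3 = (2*n+1)+2 from by ring, Nat.fib_add_two]
    have b : Nat.fib (2*n+4) = Nat.fib (2*n+2) + Nat.fib (2*n+3) := by
      rw [show 2*n+4 = (2*n+2)+2 from by ring, Nat.fib_add_two]
    refine ⟨?_, ?_⟩
    · rw [cgcnt_succ_false, ih.1, ih.2, show 2*(n+1)+2 = 2*n+4 from by ring, b, a]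
      ring
    · rw [cgcnt_succ_true, ih.1, ih.2, show 2*(n+1)+1 = 2*n+3 from by ring, a]
      ring

/-! ### The bijection with Chung–Graham finsupps. -/

lemma getD_ofFn_half (m : ℕ) (a : ℕ → ℕ) (hb : ∀ i, 2*m < i → a i = 0) (k : ℕ) :
    (List.ofFn fun k : Fin (m+1) => a (2*(k:ℕ))).getD k 0 = a (2*k) := by
  by_cases h : k < m + 1
  · rw [List.getD_eq_getElem _ 0 (by simpa using h), List.getElem_ofFn]
  · rw [List.getD_eq_default _ 0 (by simpa using h)]
    exact (hb (2*k) (by omega)).symm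

lemma cgok_iff_CG (m : ℕ) (a : ℕ →₀ ℕ) (ha2 : ∀ i, a i ≤ 2)
    (hb : ∀ i, 2*m < i → a i = 0) :
    cgok false (List.ofFn fun k : Fin (m+1) => a (2*(k:ℕ))) = true ↔
    (∀ i j, Even i → Even j → i < j → a i = 2 → a j = 2 →
      ∃ k, Even k ∧ i < k ∧ k < j ∧ a k = 0) := by
  set l := List.ofFn fun k : Fin (m+1) => a (2*(k:ℕ)) with hl
  have hget : ∀ k, l.getD k 0 = a (2*k) := getD_ofFn_half m a hb
  have hbnd : ∀ x ∈ l, x ≤ 2 := by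
    intro x hx
    rw [hl, List.mem_ofFn] at hx
    obtain ⟨k, rfl⟩ := hx
    exact ha2 _
  rw [(cgok_iff l hbnd).1]
  constructor
  · intro h i j hi hj hij h2i h2j
    obtain ⟨i', rfl⟩ := hi
    obtain ⟨j', rfl⟩ := hj
    obtain ⟨k, hk1, hk2, hk3⟩ := h i' j' (by omega)
      (by rw [hget]; rwa [show 2*i' = i' + i' from by ring])
      (by rw [hget]; rwa [show 2*j' = j' + j' from by ring])
    exact ⟨2*k, ⟨k, by ring⟩, by omega, by omega, by rw [← hget k]; exact hk3⟩
  · intro h i j hij hi hj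
    rw [hget] at hi hj
    obtain ⟨k, hke, hk1, hk2, hk3⟩ := h (2*i) (2*j) ⟨i, by ring⟩ ⟨j, by ring⟩
      (by omega) hi hj
    obtain ⟨k', rfl⟩ := hke
    refine ⟨k', by omega, by omega, ?_⟩
    rw [hget]
    rwa [show 2*k' = k' + k' from by ring]

/-- The finsupp built from a digit string. -/
noncomputable def cgMk (m : ℕ) (f : Fin (m+1) → Fin 3) : ℕ →₀ ℕ :=
  Finsupp.onFinset (Finset.range (2*m+1))
    (fun i => if i % 2 = 0 ∧ i ≤ 2*m
      then (f ⟨i/2 % (m+1), Nat.mod_lt _ (Nat.succ_pos m)⟩ : ℕ) else 0)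
    (fun i hi => by
      rw [Finset.mem_range]
      by_contra hc
      exact hi (if_neg (by omega)))

lemma cgMk_apply (m : ℕ) (f : Fin (m+1) → Fin 3) (i : ℕ) :
    cgMk m f i = if i % 2 = 0 ∧ i ≤ 2*m
      then (f ⟨i/2 % (m+1), Nat.mod_lt _ (Nat.succ_pos m)⟩ : ℕ) else 0 :=
  rfl

lemma cgMk_apply_even (m : ℕ) (f : Fin (m+1) → Fin 3) (k : Fin (m+1)) :
    cgMk m f (2*(k:ℕ)) = f k := by
  have hk : (k : ℕ) < m + 1 := k.isLt
  rw [cgMk_apply, if_pos (by constructor <;> omega)]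
  have hk2 : (⟨2*(k:ℕ)/2 % (m+1), Nat.mod_lt _ (Nat.succ_pos m)⟩ : Fin (m+1)) = k := by
    ext
    show (2*(k:ℕ))/2 % (m+1) = (k:ℕ)
    rw [Nat.mod_eq_of_lt (by omega)]
    omega
  rw [hk2]

lemma cgMk_le (m : ℕ) (f : Fin (m+1) → Fin 3) (i : ℕ) : cgMk m f i ≤ 2 := by
  rw [cgMk_apply]
  split
  · exact Nat.lt_succ_iff.mp (f _).isLt
  · omega

lemma cgMk_odd (m : ℕ) (f : Fin (m+1) → Fin 3) (i : ℕ) (hi : Odd i) :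
    cgMk m f i = 0 := by
  rw [Nat.odd_iff] at hi
  rw [cgMk_apply, if_neg (by omega)]

lemma cgMk_bound (m : ℕ) (f : Fin (m+1) → Fin 3) (i : ℕ) (hi : 2*m < i) :
    cgMk m f i = 0 := by
  rw [cgMk_apply, if_neg (by omega)]

noncomputable def cgSetEquiv (m : ℕ) :
    {a : ℕ →₀ ℕ | IsChungGraham a ∧ ∀ i, 2 * m < i → a i = 0} ≃
    {f : Fin (m+1) → Fin 3 //
      cgok false (List.ofFn fun i => (f i : ℕ)) = true} where
  toFun a := ⟨fun k => ⟨a.1 (2*(k:ℕ)), by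
      have := a.2.1.1 (2*(k:ℕ)); omega⟩,
    (cgok_iff_CG m a.1 a.2.1.1 a.2.2).2 a.2.1.2.2⟩
  invFun f := ⟨cgMk m f.1, by
    refine ⟨⟨cgMk_le m f.1, fun i hi => cgMk_odd m f.1 i hi, ?_⟩,
      fun i hi => cgMk_bound m f.1 i hi⟩
    refine (cgok_iff_CG m (cgMk m f.1) (cgMk_le m f.1)
      (fun i hi => cgMk_bound m f.1 i hi)).1 ?_
    have : (List.ofFn fun k : Fin (m+1) => cgMk m f.1 (2*(k:ℕ))) =
        List.ofFn fun i => (f.1 i : ℕ) := by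
      congr 1
      funext k
      rw [cgMk_apply_even]
    rw [this]
    exact f.2⟩
  left_inv a := by
    apply Subtype.ext
    apply Finsupp.ext
    intro i
    rw [cgMk_apply]
    split
    · rename_i h
      show a.1 (2 * (i / 2 % (m+1))) = a.1 i
      congr 1
      rw [Nat.mod_eq_of_lt (by omega)]
      omega
    · rename_i h
      rcases Nat.even_or_odd i with he | ho
      · rw [Nat.even_iff] at he
        exact (a.2.2 i (by omega)).symm
      · exact (a.2.1.2.1 i ho).symm
  right_inv f := by
    apply Subtype.ext
    funext k
    exact Fin.val_injective (cgMk_apply_even m f.1 k)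

theorem card_chung_graham_bounded (m : ℕ) :
    {a : ℕ →₀ ℕ | IsChungGraham a ∧ ∀ i, 2 * m < i → a i = 0}.ncard =
      Nat.fib (2 * m + 4) := by
  rw [← Nat.card_coe_set_eq, Nat.card_congr (cgSetEquiv m),
    Nat.card_eq_fintype_card,
    show (Fintype.card {f : Fin (m+1) → Fin 3 //
      cgok false (List.ofFn fun i => (f i : ℕ)) = true}) = cgcnt false (m+1)
      from rfl,
    (cgcnt_eq (m+1)).1, show 2*(m+1)+2 = 2*m+4 from by ring]
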